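/- Let n and d be positive integers and let B^base = (B^base_1,…,B^base_d), B^prev, B^next be vectors of positive integers with B^base_q | B^prev_q | B^next_q | n for every q. Let x : (ZMod n)^d → ℂ, let α ∈ (ZMod n)^d, let β ∈ ∏_q ZMod B^next_q, and let b ∈ ∏_q {0,…,B^base_q − 1}. Then U_x^{α + ℓ(β)}(B^base, b) = ∑_{r ∈ ∏_q {0,…,B^prev_q/B^base_q − 1}} ∑_{s ∈ ∏_q {0,…,B^next_q/B^prev_q − 1}} e^{2πi·∑_q (b_q + r_q·B^base_q + s_q·B^prev_q)·rep(β_q)/B^next_q} · U_x^α(B^next, φ(b,r,s)), where ℓ(β) ∈ (ZMod n)^d has q-th coordinate rep(β_q)·(n/B^next_q), rep denotes the standard representative, and φ(b,r,s) ∈ ∏_q ZMod B^next_q has q-th coordinate b_q + r_q·B^base_q + s_q·B^prev_q. -/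

import Mathlib

open scoped BigOperators

/-- The `d`-dimensional discrete Fourier transform on `(ZMod n)^d`. -/
noncomputable def dft (n d : ℕ) [NeZero n] (x : (Fin d → ZMod n) → ℂ) :
    (Fin d → ZMod n) → ℂ :=
  fun f => ∑ t : Fin d → ZMod n, x t *
    Complex.exp (-(2 * (Real.pi : ℂ) * Complex.I) *
      (((∑ q, f q * t q : ZMod n)).val : ℂ) / (n : ℂ))

/-- The bucketing of `x` with shift `a`:
`U_x^a(B, b) = ∑_{f mod B = b} x̂(f) · e^{2πi·(f·a)/n}`. -/
noncomputable def bucket (n d : ℕ) [NeZero n] (B : Fin d → ℕ) (hB : ∀ q, B q ∣ n)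
    (x : (Fin d → ZMod n) → ℂ) (a : Fin d → ZMod n) (b : ∀ q, ZMod (B q)) : ℂ :=
  ∑ f ∈ Finset.univ.filter (fun f : Fin d → ZMod n =>
      ∀ q, ZMod.castHom (hB q) (ZMod (B q)) (f q) = b q),
    dft n d x f *
      Complex.exp ((2 * (Real.pi : ℂ) * Complex.I) *
        (((∑ q, f q * a q : ZMod n)).val : ℂ) / (n : ℂ))

noncomputable def ee (N a : ℕ) : ℂ :=
  Complex.exp ((2 * (Real.pi : ℂ) * Complex.I) * (a : ℂ) / (N : ℂ))

lemma ee_mod (N a : ℕ) : ee N a = ee N (a % N) := by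
  rcases eq_or_ne N 0 with rfl | hN
  · simp [Nat.mod_zero]
  conv_lhs => rw [← Nat.div_add_mod a N]
  unfold ee
  have hN' : (N : ℂ) ≠ 0 := Nat.cast_ne_zero.mpr hN
  push_cast
  rw [show (2 * (Real.pi:ℂ) * Complex.I) * ((N : ℂ) * (↑(a / N)) + ↑(a % N)) / N
      = ((a / N : ℕ) : ℂ) * (2 * Real.pi * Complex.I) + (2 * Real.pi * Complex.I) * ↑(a % N) / N by
    field_simp]
  rw [Complex.exp_add]
  rw [show ((a / N : ℕ) : ℂ) = (((a / N : ℕ) : ℤ) : ℂ) from (Int.cast_natCast _).symm]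
  rw [Complex.exp_int_mul_two_pi_mul_I, one_mul]

lemma ee_congr (N a b : ℕ) (h : a % N = b % N) : ee N a = ee N b := by
  rw [ee_mod N a, ee_mod N b, h]

lemma ee_add (N a b : ℕ) : ee N (a + b) = ee N a * ee N b := by
  unfold ee
  rw [← Complex.exp_add]
  congr 1
  push_cast
  rw [mul_add, add_div]

lemma ee_dvd_mul (N n k : ℕ) (h : N ∣ n) (hn : n ≠ 0) : ee n (k * (n / N)) = ee N k := by
  obtain ⟨m, rfl⟩ := h
  have hN : (N : ℕ) ≠ 0 := by rintro rfl; simp at hn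
  have hm : (m : ℕ) ≠ 0 := by rintro rfl; simp at hn
  unfold ee
  rw [Nat.mul_div_cancel_left m (Nat.pos_of_ne_zero hN)]
  congr 1
  have hmC : (m : ℂ) ≠ 0 := Nat.cast_ne_zero.mpr hm
  have hNC : (N : ℂ) ≠ 0 := Nat.cast_ne_zero.mpr hN
  push_cast
  field_simp

lemma ee_val_sum {n : ℕ} [NeZero n] {ι : Type*} (s : Finset ι) (u : ι → ZMod n) :
    ee n (∑ i ∈ s, u i).val = ∏ i ∈ s, ee n (u i).val := by
  induction s using Finset.cons_induction with
  | empty => simp [ee]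
  | cons a s ha ih =>
      rw [Finset.sum_cons, Finset.prod_cons, ← ih, ZMod.val_add,
        ← ee_mod, ee_add]

lemma castHom_eq_val {n B : ℕ} [NeZero n] (h : B ∣ n) (a : ZMod n) :
    ZMod.castHom h (ZMod B) a = ((a.val : ℕ) : ZMod B) := by
  rw [ZMod.castHom_apply, ZMod.natCast_val]
open scoped BigOperators

lemma key_count (B P N : ℕ) [NeZero B] [NeZero P] [NeZero N]
    (hbp : B ∣ P) (hpn : P ∣ N) (b : ℕ) (hb : b < B) (v : ZMod N) :
    (∑ r : Fin (P / B), ∑ s : Fin (N / P),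
        (if ((b + (r : ℕ) * B + (s : ℕ) * P : ℕ) : ZMod N) = v then (1:ℂ) else 0))
      = if ZMod.castHom (hbp.trans hpn) (ZMod B) v = ((b : ℕ) : ZMod B) then 1 else 0 := by
  have hB0 : 0 < B := Nat.pos_of_ne_zero (NeZero.ne B)
  have hP0 : 0 < P := Nat.pos_of_ne_zero (NeZero.ne P)
  have hN0 : 0 < N := Nat.pos_of_ne_zero (NeZero.ne N)
  have hPB : P / B * B = P := Nat.div_mul_cancel hbp
  have hNP : N / P * P = N := Nat.div_mul_cancel hpn
  have hBP' : B * (P / B) = P := by rw [mul_comm]; exact hPB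
  set g : Fin (P / B) × Fin (N / P) → ℕ :=
    fun p => b + (p.1 : ℕ) * B + (p.2 : ℕ) * P with hg
  -- bound
  have hlt : ∀ p : Fin (P / B) × Fin (N / P), g p < N := by
    rintro ⟨r, s⟩
    have h1 : b + (r : ℕ) * B < P := by
      calc b + (r : ℕ) * B < B + (r : ℕ) * B := by omega
        _ = ((r : ℕ) + 1) * B := by ring
        _ ≤ P / B * B := Nat.mul_le_mul_right B r.2
        _ = P := hPB
    calc g (r, s) = (b + (r : ℕ) * B) + (s : ℕ) * P := rfl
      _ < P + (s : ℕ) * P := by omega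
      _ = ((s : ℕ) + 1) * P := by ring
      _ ≤ N / P * P := Nat.mul_le_mul_right P s.2
      _ = N := hNP
  -- injectivity
  have hinj : ∀ p1 p2, g p1 = g p2 → p1 = p2 := by
    rintro ⟨r1, s1⟩ ⟨r2, s2⟩ h
    simp only [hg] at h
    have h' : B * ((r1 : ℕ) + (s1 : ℕ) * (P / B)) = B * ((r2 : ℕ) + (s2 : ℕ) * (P / B)) := by
      have h0 : (r1 : ℕ) * B + (s1 : ℕ) * (B * (P / B)) = (r2 : ℕ) * B + (s2 : ℕ) * (B * (P / B)) := by
        rw [hBP']; omega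
      ring_nf at h0 ⊢
      omega
    have h2 := Nat.eq_of_mul_eq_mul_left hB0 h'
    have hr : (r1 : ℕ) = (r2 : ℕ) := by
      have e1 := Nat.add_mul_mod_self_right (r1 : ℕ) (s1 : ℕ) (P / B)
      have e2 := Nat.add_mul_mod_self_right (r2 : ℕ) (s2 : ℕ) (P / B)
      rw [Nat.mod_eq_of_lt r1.2] at e1
      rw [Nat.mod_eq_of_lt r2.2] at e2
      rw [← e1, ← e2, h2]
    have hpb0 : 0 < P / B := Nat.div_pos (Nat.le_of_dvd hP0 hbp) hB0
    have hs : (s1 : ℕ) = (s2 : ℕ) := by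
      have h3 : (s1 : ℕ) * (P / B) = (s2 : ℕ) * (P / B) := by omega
      exact Nat.eq_of_mul_eq_mul_right hpb0 h3
    exact Prod.ext (Fin.ext hr) (Fin.ext hs)
  have hsum : (∑ r : Fin (P / B), ∑ s : Fin (N / P),
        (if ((b + (r : ℕ) * B + (s : ℕ) * P : ℕ) : ZMod N) = v then (1:ℂ) else 0))
      = ∑ p : Fin (P / B) × Fin (N / P), (if ((g p : ℕ) : ZMod N) = v then (1:ℂ) else 0) :=
    (Fintype.sum_prod_type (fun p : Fin (P / B) × Fin (N / P) => if ((g p : ℕ) : ZMod N) = v then (1:ℂ) else 0)).symm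
  rw [hsum]
  by_cases hc : ZMod.castHom (hbp.trans hpn) (ZMod B) v = ((b : ℕ) : ZMod B)
  · rw [if_pos hc]
    set m := v.val with hm
    have hmN : m < N := ZMod.val_lt v
    have hvm : ((m : ℕ) : ZMod N) = v := ZMod.natCast_rightInverse v
    have hmb : m % B = b := by
      have h1 : ((m : ℕ) : ZMod B) = ((b : ℕ) : ZMod B) := by
        rw [← hc, ← hvm, map_natCast]
      rw [ZMod.natCast_eq_natCast_iff] at h1
      have h2 : m % B = b % B := h1
      rwa [Nat.mod_eq_of_lt hb] at h2
    have hpb0 : 0 < P / B := Nat.div_pos (Nat.le_of_dvd hP0 hbp) hB0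
    set r0 : ℕ := m / B % (P / B) with hr0
    set s0 : ℕ := m / P with hs0
    have hr0lt : r0 < P / B := Nat.mod_lt _ hpb0
    have hs0lt : s0 < N / P := by
      rw [hs0, Nat.div_lt_iff_lt_mul hP0, hNP]
      exact hmN
    have e1 : m = B * (m / B) + b := by
      conv_lhs => rw [← Nat.div_add_mod m B]
      rw [hmb]
    have e2 : m / B = (P / B) * (m / P) + r0 := by
      conv_lhs => rw [← Nat.div_add_mod (m / B) (P / B)]
      rw [Nat.div_div_eq_div_mul, hBP']
    have hgid : b + r0 * B + s0 * P = m := by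
      calc b + r0 * B + s0 * P = b + r0 * B + s0 * (B * (P / B)) := by rw [hBP']
        _ = B * ((P / B) * s0 + r0) + b := by ring
        _ = B * ((P / B) * (m / P) + r0) + b := by rw [hs0]
        _ = B * (m / B) + b := by rw [← e2]
        _ = m := e1.symm
    set p0 : Fin (P / B) × Fin (N / P) := (⟨r0, hr0lt⟩, ⟨s0, hs0lt⟩) with hp0
    have hgp0 : g p0 = m := hgid
    rw [Finset.sum_eq_single_of_mem p0 (Finset.mem_univ _)]
    · rw [if_pos (by rw [hgp0]; exact hvm)]
    · rintro p - hne
      rw [if_neg]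
      intro hEq
      apply hne
      apply hinj
      have hcast : ((g p : ℕ) : ZMod N) = ((g p0 : ℕ) : ZMod N) := by
        rw [hEq, hgp0]; exact hvm.symm
      have h1 := ZMod.val_cast_of_lt (hlt p)
      have h2 := ZMod.val_cast_of_lt (hlt p0)
      rw [← h1, ← h2, hcast]
  · rw [if_neg hc]
    apply Finset.sum_eq_zero
    intro p _
    rw [if_neg]
    intro hEq
    apply hc
    rw [← hEq, map_natCast]
    show ((b + (p.1 : ℕ) * B + (p.2 : ℕ) * P : ℕ) : ZMod B) = _
    push_cast
    rw [ZMod.natCast_self, (ZMod.natCast_eq_zero_iff P B).mpr hbp]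
    ring

lemma ee_val_add {n : ℕ} [NeZero n] (u w : ZMod n) :
    ee n (u + w).val = ee n u.val * ee n w.val := by
  rw [ZMod.val_add, ← ee_mod, ee_add]

lemma E_eq_prod {d : ℕ} (N : Fin d → ℕ) (c : Fin d → ℕ) :
    Complex.exp ((2 * (Real.pi : ℂ) * Complex.I) *
        ∑ q, ((c q : ℕ) : ℂ) / ((N q : ℕ) : ℂ)) = ∏ q, ee (N q) (c q) := by
  rw [Finset.mul_sum, Complex.exp_sum]
  apply Finset.prod_congr rfl
  intro q _
  rw [ee, mul_div_assoc]

lemma psiL (n : ℕ) [NeZero n] {d : ℕ} (N : Fin d → ℕ) [∀ q, NeZero (N q)]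
    (hnn : ∀ q, N q ∣ n) (β : ∀ q, ZMod (N q)) (c : Fin d → ℕ) (f : Fin d → ZMod n)
    (hf : ∀ q, ZMod.castHom (hnn q) (ZMod (N q)) (f q) = ((c q : ℕ) : ZMod (N q))) :
    ee n (∑ q, f q * (((β q).val * (n / N q) : ℕ) : ZMod n)).val
      = ∏ q, ee (N q) (c q * (β q).val) := by
  rw [ee_val_sum]
  apply Finset.prod_congr rfl
  intro q _
  have h1 : f q * ((((β q).val * (n / N q) : ℕ)) : ZMod n)
      = (((f q).val * ((β q).val * (n / N q)) : ℕ) : ZMod n) := by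
    conv_lhs => rw [← ZMod.natCast_rightInverse (f q)]
    push_cast
    ring
  rw [h1, ZMod.val_natCast, ← ee_mod, ← mul_assoc,
    ee_dvd_mul _ _ _ (hnn q) (NeZero.ne n)]
  apply ee_congr
  have h2 : ((f q).val : ZMod (N q)) = ((c q : ℕ) : ZMod (N q)) := by
    rw [← castHom_eq_val (hnn q), hf q]
  rw [ZMod.natCast_eq_natCast_iff] at h2
  exact (h2.mul_right (β q).val : _)

lemma castHom_castHom {n N B : ℕ} (h1 : N ∣ n) (h2 : B ∣ N) (a : ZMod n) :
    ZMod.castHom h2 (ZMod B) (ZMod.castHom h1 (ZMod N) a)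
      = ZMod.castHom (h2.trans h1) (ZMod B) a := by
  have := congrArg (fun φ => φ a) (ZMod.castHom_comp h2 h1)
  exact this

lemma count_pi (n : ℕ) [NeZero n] {d : ℕ} (Bb Bp Bn : Fin d → ℕ)
    [∀ q, NeZero (Bb q)] [∀ q, NeZero (Bp q)] [∀ q, NeZero (Bn q)]
    (hbp : ∀ q, Bb q ∣ Bp q) (hpn : ∀ q, Bp q ∣ Bn q) (hnn : ∀ q, Bn q ∣ n)
    (b : Fin d → ℕ) (hb : ∀ q, b q < Bb q) (f : Fin d → ZMod n) :
    (∑ r : ∀ q, Fin (Bp q / Bb q), ∑ s : ∀ q, Fin (Bn q / Bp q),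
        if (∀ q, ZMod.castHom (hnn q) (ZMod (Bn q)) (f q)
            = ((b q + (r q : ℕ) * Bb q + (s q : ℕ) * Bp q : ℕ) : ZMod (Bn q)))
          then (1:ℂ) else 0)
      = if (∀ q, ZMod.castHom ((hbp q).trans ((hpn q).trans (hnn q))) (ZMod (Bb q)) (f q)
            = ((b q : ℕ) : ZMod (Bb q))) then 1 else 0 := by
  have conv1 : ∀ (P : Fin d → Prop) [DecidablePred P],
      (if (∀ q, P q) then (1:ℂ) else 0) = ∏ q, if P q then 1 else 0 := by
    intro P _
    rw [Finset.prod_boole]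
    simp
  calc (∑ r : ∀ q, Fin (Bp q / Bb q), ∑ s : ∀ q, Fin (Bn q / Bp q),
        if (∀ q, ZMod.castHom (hnn q) (ZMod (Bn q)) (f q)
            = ((b q + (r q : ℕ) * Bb q + (s q : ℕ) * Bp q : ℕ) : ZMod (Bn q)))
          then (1:ℂ) else 0)
      = ∑ r : ∀ q, Fin (Bp q / Bb q), ∑ s : ∀ q, Fin (Bn q / Bp q),
          ∏ q, (if ZMod.castHom (hnn q) (ZMod (Bn q)) (f q)
            = ((b q + (r q : ℕ) * Bb q + (s q : ℕ) * Bp q : ℕ) : ZMod (Bn q))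
            then (1:ℂ) else 0) := by
        apply Finset.sum_congr rfl; intro r _
        apply Finset.sum_congr rfl; intro s _
        exact conv1 _
    _ = ∑ r : ∀ q, Fin (Bp q / Bb q), ∏ q,
          ∑ j : Fin (Bn q / Bp q), (if ZMod.castHom (hnn q) (ZMod (Bn q)) (f q)
            = ((b q + (r q : ℕ) * Bb q + (j : ℕ) * Bp q : ℕ) : ZMod (Bn q))
            then (1:ℂ) else 0) := by
        apply Finset.sum_congr rfl; intro r _
        rw [Finset.prod_univ_sum, Fintype.piFinset_univ]
    _ = ∏ q, ∑ i : Fin (Bp q / Bb q),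
          ∑ j : Fin (Bn q / Bp q), (if ZMod.castHom (hnn q) (ZMod (Bn q)) (f q)
            = ((b q + (i : ℕ) * Bb q + (j : ℕ) * Bp q : ℕ) : ZMod (Bn q))
            then (1:ℂ) else 0) := by
        rw [Finset.prod_univ_sum, Fintype.piFinset_univ]
    _ = ∏ q, (if ZMod.castHom ((hbp q).trans ((hpn q).trans (hnn q))) (ZMod (Bb q)) (f q)
            = ((b q : ℕ) : ZMod (Bb q)) then (1:ℂ) else 0) := by
        apply Finset.prod_congr rfl; intro q _
        have hk := key_count (Bb q) (Bp q) (Bn q) (hbp q) (hpn q) (b q) (hb q)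
          (ZMod.castHom (hnn q) (ZMod (Bn q)) (f q))
        rw [← castHom_castHom (hnn q) ((hbp q).trans (hpn q)) (f q)]
        rw [← hk]
        apply Finset.sum_congr rfl; intro i _
        apply Finset.sum_congr rfl; intro j _
        simp [eq_comm]
    _ = _ := (conv1 _).symm

theorem stmt10 (n d : ℕ) [NeZero n] (hd : 1 ≤ d)
    (Bbase Bprev Bnext : Fin d → ℕ)
    [∀ q, NeZero (Bbase q)] [∀ q, NeZero (Bprev q)] [∀ q, NeZero (Bnext q)]
    (hbp : ∀ q, Bbase q ∣ Bprev q) (hpn : ∀ q, Bprev q ∣ Bnext q)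
    (hnn : ∀ q, Bnext q ∣ n)
    (x : (Fin d → ZMod n) → ℂ) (α : Fin d → ZMod n)
    (β : ∀ q, ZMod (Bnext q))
    (b : Fin d → ℕ) (hb : ∀ q, b q < Bbase q) :
    bucket n d Bbase (fun q => (hbp q).trans ((hpn q).trans (hnn q))) x
        (α + fun q => (((β q).val * (n / Bnext q) : ℕ) : ZMod n))
        (fun q => ((b q : ℕ) : ZMod (Bbase q)))
      = ∑ r : ∀ q, Fin (Bprev q / Bbase q), ∑ s : ∀ q, Fin (Bnext q / Bprev q),
          Complex.exp ((2 * (Real.pi : ℂ) * Complex.I) *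
            ∑ q, (((b q + (r q : ℕ) * Bbase q + (s q : ℕ) * Bprev q) * (β q).val : ℕ) : ℂ)
              / ((Bnext q : ℕ) : ℂ)) *
          bucket n d Bnext hnn x α
            (fun q => (((b q + (r q : ℕ) * Bbase q + (s q : ℕ) * Bprev q : ℕ)) :
              ZMod (Bnext q))) := by
  classical
  set L : Fin d → ZMod n := fun q => (((β q).val * (n / Bnext q) : ℕ) : ZMod n) with hL
  set G : (Fin d → ZMod n) → ℂ := fun f =>
    dft n d x f * ee n (∑ q, f q * α q).val * ee n (∑ q, f q * L q).val with hG
  -- LHS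
  have hLHS : bucket n d Bbase (fun q => (hbp q).trans ((hpn q).trans (hnn q))) x
      (α + L) (fun q => ((b q : ℕ) : ZMod (Bbase q)))
      = ∑ f ∈ Finset.univ.filter (fun f : Fin d → ZMod n =>
          ∀ q, ZMod.castHom ((hbp q).trans ((hpn q).trans (hnn q))) (ZMod (Bbase q)) (f q)
            = ((b q : ℕ) : ZMod (Bbase q))), G f := by
    show (∑ f ∈ Finset.univ.filter (fun f : Fin d → ZMod n =>
          ∀ q, ZMod.castHom ((hbp q).trans ((hpn q).trans (hnn q))) (ZMod (Bbase q)) (f q)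
            = ((b q : ℕ) : ZMod (Bbase q))),
        dft n d x f * ee n (∑ q, f q * (α + L) q).val) = _
    apply Finset.sum_congr rfl
    intro f _
    have hsplit : (∑ q, f q * (α + L) q) = (∑ q, f q * α q) + (∑ q, f q * L q) := by
      rw [← Finset.sum_add_distrib]
      apply Finset.sum_congr rfl
      intro q _
      simp [mul_add]
    rw [hsplit, ee_val_add, hG, ← mul_assoc]
  -- RHS buckets
  have hRHS : ∀ (c : ∀ q, ZMod (Bnext q)), bucket n d Bnext hnn x α c
      = ∑ f ∈ Finset.univ.filter (fun f : Fin d → ZMod n =>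
          ∀ q, ZMod.castHom (hnn q) (ZMod (Bnext q)) (f q) = c q),
        dft n d x f * ee n (∑ q, f q * α q).val := fun _ => rfl
  rw [hLHS]
  have hstep : ∀ (r : ∀ q, Fin (Bprev q / Bbase q)) (s : ∀ q, Fin (Bnext q / Bprev q)),
      Complex.exp ((2 * (Real.pi : ℂ) * Complex.I) *
          ∑ q, (((b q + (r q : ℕ) * Bbase q + (s q : ℕ) * Bprev q) * (β q).val : ℕ) : ℂ)
            / ((Bnext q : ℕ) : ℂ)) *
        bucket n d Bnext hnn x α
          (fun q => (((b q + (r q : ℕ) * Bbase q + (s q : ℕ) * Bprev q : ℕ)) :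
            ZMod (Bnext q)))
      = ∑ f ∈ Finset.univ.filter (fun f : Fin d → ZMod n =>
          ∀ q, ZMod.castHom (hnn q) (ZMod (Bnext q)) (f q)
            = ((b q + (r q : ℕ) * Bbase q + (s q : ℕ) * Bprev q : ℕ) : ZMod (Bnext q))),
          G f := by
    intro r s
    rw [hRHS, Finset.mul_sum]
    apply Finset.sum_congr rfl
    intro f hf
    rw [Finset.mem_filter] at hf
    have hE := E_eq_prod Bnext
      (fun q => (b q + (r q : ℕ) * Bbase q + (s q : ℕ) * Bprev q) * (β q).val)
    rw [hE, ← psiL n Bnext hnn β (fun q => b q + (r q : ℕ) * Bbase q + (s q : ℕ) * Bprev q)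
      f hf.2]
    rw [hG]
    ring
  calc (∑ f ∈ Finset.univ.filter (fun f : Fin d → ZMod n =>
          ∀ q, ZMod.castHom ((hbp q).trans ((hpn q).trans (hnn q))) (ZMod (Bbase q)) (f q)
            = ((b q : ℕ) : ZMod (Bbase q))), G f)
      = ∑ f : Fin d → ZMod n,
          G f * (if (∀ q, ZMod.castHom ((hbp q).trans ((hpn q).trans (hnn q)))
            (ZMod (Bbase q)) (f q) = ((b q : ℕ) : ZMod (Bbase q))) then 1 else 0) := by
        rw [Finset.sum_filter]
        apply Finset.sum_congr rfl
        intro f _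
        split <;> simp
    _ = ∑ f : Fin d → ZMod n, G f *
          (∑ r : ∀ q, Fin (Bprev q / Bbase q), ∑ s : ∀ q, Fin (Bnext q / Bprev q),
            if (∀ q, ZMod.castHom (hnn q) (ZMod (Bnext q)) (f q)
              = ((b q + (r q : ℕ) * Bbase q + (s q : ℕ) * Bprev q : ℕ) : ZMod (Bnext q)))
            then (1:ℂ) else 0) := by
        apply Finset.sum_congr rfl
        intro f _
        rw [count_pi n Bbase Bprev Bnext hbp hpn hnn b hb f]
    _ = ∑ r : ∀ q, Fin (Bprev q / Bbase q), ∑ s : ∀ q, Fin (Bnext q / Bprev q),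
          ∑ f : Fin d → ZMod n,
            (if (∀ q, ZMod.castHom (hnn q) (ZMod (Bnext q)) (f q)
              = ((b q + (r q : ℕ) * Bbase q + (s q : ℕ) * Bprev q : ℕ) : ZMod (Bnext q)))
            then G f else 0) := by
        simp only [Finset.mul_sum]
        rw [Finset.sum_comm]
        apply Finset.sum_congr rfl
        intro r _
        rw [Finset.sum_comm]
        apply Finset.sum_congr rfl
        intro s _
        apply Finset.sum_congr rfl
        intro f _
        split <;> simp
    _ = ∑ r : ∀ q, Fin (Bprev q / Bbase q), ∑ s : ∀ q, Fin (Bnext q / Bprev q),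
          ∑ f ∈ Finset.univ.filter (fun f : Fin d → ZMod n =>
            ∀ q, ZMod.castHom (hnn q) (ZMod (Bnext q)) (f q)
              = ((b q + (r q : ℕ) * Bbase q + (s q : ℕ) * Bprev q : ℕ) : ZMod (Bnext q))),
            G f := by
        apply Finset.sum_congr rfl; intro r _
        apply Finset.sum_congr rfl; intro s _
        rw [Finset.sum_filter]
    _ = _ := by
        apply Finset.sum_congr rfl; intro r _
        apply Finset.sum_congr rfl; intro s _
        rw [hstep r s]
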